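/- For all positive integers p and q with p ≥ q, the minimum covering radius over all relabelings of the (p,q)-type group satisfies L_min(G_{p,q}) ≥ L_min(G_p), where G_p is the cyclic subgroup of S_p generated by the p-cycle (1,2,…,p). -/

import Mathlib

open Equiv

/-- The ℓ∞-distance between two permutations of `Fin n`. -/
noncomputable def linfDist {n : ℕ} (f g : Perm (Fin n)) : ℕ :=
  Finset.univ.sup fun i : Fin n => (((f i).val : ℤ) - ((g i).val : ℤ)).natAbs

/-- The distance from a permutation to a code `C`. -/
noncomputable def distToCode {n : ℕ} (f : Perm (Fin n)) (C : Set (Perm (Fin n))) : ℕ :=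
  sInf (linfDist f '' C)

/-- The covering radius of a code `C ⊆ Sₙ`. -/
noncomputable def coveringRadius {n : ℕ} (C : Set (Perm (Fin n))) : ℕ :=
  sSup (Set.range fun f : Perm (Fin n) => distToCode f C)

/-- The relabeling `C^π = π C π⁻¹`. -/
def conjCode {n : ℕ} (π : Perm (Fin n)) (C : Set (Perm (Fin n))) : Set (Perm (Fin n)) :=
  (fun g => π * g * π⁻¹) '' C

/-- Maximum covering radius over all relabelings. -/
noncomputable def Lmax {n : ℕ} (C : Set (Perm (Fin n))) : ℕ :=
  sSup (Set.range fun π : Perm (Fin n) => coveringRadius (conjCode π C))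

/-- Minimum covering radius over all relabelings. -/
noncomputable def Lmin {n : ℕ} (C : Set (Perm (Fin n))) : ℕ :=
  sInf (Set.range fun π : Perm (Fin n) => coveringRadius (conjCode π C))

/-- The `(p,q)`-type group `G_{p,q} = ⟨(1,…,p), (p+1,…,p+q)⟩ ⊆ S_{p+q}`
(using `0`-indexed `Fin (p+q)`). -/
def Gpq (p q : ℕ) : Subgroup (Perm (Fin (p + q))) :=
  Subgroup.closure
    { ((List.finRange p).map (Fin.castLE (Nat.le_add_right p q))).formPerm,
      ((List.finRange q).map (Fin.natAdd p)).formPerm }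

/-- The transitive cyclic group `Gₙ = ⟨(1,2,…,n)⟩`. -/
def Gcyc (n : ℕ) : Subgroup (Perm (Fin n)) := Subgroup.closure {finRotate n}

/-- The natural dihedral group
`Dₙ = ⟨(1,2,…,n), ∏_{i=1}^{⌊n/2⌋} (i, n-i)⟩` (using `0`-indexed `Fin n`). -/
def Dn (n : ℕ) : Subgroup (Perm (Fin n)) :=
  Subgroup.closure
    { finRotate n,
      (((List.finRange (n / 2)).map fun i =>
        Equiv.swap (⟨i.val, by have := i.isLt; omega⟩ : Fin n)
          (⟨n - 2 - i.val, by have := i.isLt; omega⟩ : Fin n)).prod) }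

private lemma strictMono_nat_diff {p : ℕ} (g : Fin p → ℕ) (hg : StrictMono g) :
    ∀ d : ℕ, ∀ a b : Fin p, b.val = a.val + d → g a + d ≤ g b := by
  intro d
  induction d with
  | zero => intro a b hb; have : a = b := Fin.ext (by omega); simp [this]
  | succ d ih =>
    intro a b hb
    have hlt : a.val + d < p := by have := b.isLt; omega
    have h1 : g a + d ≤ g ⟨a.val + d, hlt⟩ := ih a _ rfl
    have h2 : g ⟨a.val + d, hlt⟩ < g b := hg (by simp [Fin.lt_def]; omega)
    omega

private lemma natAbs_le_of_strictMono {p N : ℕ} (m : Fin p → Fin N)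
    (hm : StrictMono fun j => (m j).val) (a b : Fin p) :
    ((a.val : ℤ) - b.val).natAbs ≤ (((m a).val : ℤ) - (m b).val).natAbs := by
  rcases le_total a.val b.val with h | h
  · have := strictMono_nat_diff _ hm (b.val - a.val) a b (by omega)
    omega
  · have := strictMono_nat_diff _ hm (a.val - b.val) b a (by omega)
    omega

private lemma cgen_apply {p q : ℕ} (hp : 1 ≤ p) (j : Fin p) :
    ((List.finRange p).map (Fin.castLE (Nat.le_add_right p q))).formPerm
      (Fin.castLE (Nat.le_add_right p q) j) =
    Fin.castLE (Nat.le_add_right p q) (finRotate p j) := by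
  obtain ⟨p, rfl⟩ : ∃ p', p = p' + 1 := ⟨p - 1, by omega⟩
  set L := (List.finRange (p+1)).map (Fin.castLE (Nat.le_add_right (p+1) q)) with hL
  have hnd : L.Nodup := (List.nodup_finRange _).map (Fin.castLE_injective _)
  have hlen : L.length = p + 1 := by simp [hL]
  have hj : j.val < L.length := by rw [hlen]; exact j.isLt
  have hget : L[j.val] = Fin.castLE (Nat.le_add_right (p+1) q) j := by simp [hL]
  have hkey := List.formPerm_apply_getElem L hnd j.val hj
  rw [hget] at hkey
  rw [hkey]
  have hrot : (finRotate (p+1) j).val = (j.val + 1) % (p+1) := by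
    rw [finRotate_succ_apply]; simp [Fin.add_def]
  apply Fin.ext
  simp [hL, hlen, hrot, Fin.add_def, Nat.add_mod_mod]

private lemma dgen_apply {p q : ℕ} (j : Fin p) :
    ((List.finRange q).map (Fin.natAdd p)).formPerm (Fin.castLE (Nat.le_add_right p q) j) =
    Fin.castLE (Nat.le_add_right p q) j := by
  apply List.formPerm_apply_of_notMem
  simp only [List.mem_map, List.mem_finRange, true_and, not_exists]
  intro i hi
  have h1 : (Fin.natAdd p i).val = p + i.val := rfl
  have h2 : (Fin.castLE (Nat.le_add_right p q) j).val = j.val := rfl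
  have := j.isLt
  rw [← hi] at h2
  omega

private lemma gpq_restrict {p q : ℕ} (hp : 1 ≤ p) {g : Perm (Fin (p+q))} (hg : g ∈ Gpq p q) :
    ∃ h ∈ Gcyc p, ∀ j : Fin p,
      g (Fin.castLE (Nat.le_add_right p q) j) = Fin.castLE (Nat.le_add_right p q) (h j) := by
  induction hg using Subgroup.closure_induction with
  | mem x hx =>
    rcases hx with rfl | rfl
    · exact ⟨finRotate p, Subgroup.subset_closure rfl, fun j => cgen_apply hp j⟩
    · exact ⟨1, one_mem _, fun j => by simpa using dgen_apply j⟩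
  | one => exact ⟨1, one_mem _, fun j => by simp⟩
  | mul x y hx hy ihx ihy =>
    obtain ⟨h1, hm1, he1⟩ := ihx
    obtain ⟨h2, hm2, he2⟩ := ihy
    exact ⟨h1 * h2, mul_mem hm1 hm2, fun j => by
      simp only [Equiv.Perm.mul_apply, he2 j, he1 (h2 j)]⟩
  | inv x hx ihx =>
    obtain ⟨h, hm, he⟩ := ihx
    refine ⟨h⁻¹, inv_mem hm, fun j => ?_⟩
    have := he (h⁻¹ j)
    rw [show h (h⁻¹ j) = j from (Equiv.eq_symm_apply h).mp rfl] at this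
    rw [← this]
    exact Equiv.Perm.inv_eq_iff_eq.mpr rfl

private lemma covering_le {p q : ℕ} (hp : 1 ≤ p) (π : Perm (Fin (p+q))) :
    ∃ ρ : Perm (Fin p),
      coveringRadius (conjCode ρ (Gcyc p : Set (Perm (Fin p)))) ≤
      coveringRadius (conjCode π (Gpq p q : Set (Perm (Fin (p+q))))) := by
  classical
  set ι : Fin p → Fin (p+q) := fun j => π (Fin.castLE (Nat.le_add_right p q) j) with hι
  have hιinj : Function.Injective ι := fun a b hab =>
    Fin.castLE_injective _ (π.injective hab)
  set S : Finset (Fin (p+q)) := Finset.univ.image ι with hSdef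
  have hScard : S.card = p := by
    rw [hSdef, Finset.card_image_of_injective _ hιinj, Finset.card_univ, Fintype.card_fin]
  set m' : Fin p ≃o S := S.orderIsoOfFin hScard with hm'
  set m : Fin p → Fin (p+q) := fun j => (m' j : Fin (p+q)) with hm
  have hmmono : StrictMono fun j => (m j).val := by
    intro a b hab
    have h := m'.strictMono hab
    rw [← Subtype.coe_lt_coe] at h
    exact h
  have hmemS : ∀ j : Fin p, ι j ∈ S := fun j => Finset.mem_image_of_mem _ (Finset.mem_univ j)
  set e1 : Fin p → S := fun j => ⟨ι j, hmemS j⟩ with he1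
  have he1inj : Function.Injective e1 := fun a b hab => hιinj (congrArg Subtype.val hab)
  have he1bij : Function.Bijective e1 := by
    rw [Fintype.bijective_iff_injective_and_card]
    exact ⟨he1inj, by simp [Fintype.card_coe, hScard]⟩
  set ρ : Perm (Fin p) := (Equiv.ofBijective e1 he1bij).trans m'.toEquiv.symm with hρ
  have key0 : ∀ j, ι j = m (ρ j) := by
    intro j
    have h2 : m' (ρ j) = e1 j := m'.toEquiv.apply_symm_apply (e1 j)
    have h3 := congrArg Subtype.val h2
    exact h3.symm
  have key1 : ∀ j, π⁻¹ (m j) = Fin.castLE (Nat.le_add_right p q) (ρ⁻¹ j) := by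
    intro j
    have h0 := key0 (ρ⁻¹ j)
    rw [show ρ (ρ⁻¹ j) = j from (Equiv.eq_symm_apply ρ).mp rfl] at h0
    rw [← h0, hι]
    exact Equiv.Perm.inv_eq_iff_eq.mpr rfl
  have key2 : ∀ g ∈ (Gpq p q : Set (Perm (Fin (p+q)))), ∃ h ∈ (Gcyc p : Set (Perm (Fin p))),
      ∀ j, (π * g * π⁻¹) (m j) = m ((ρ * h * ρ⁻¹) j) := by
    intro g hg
    obtain ⟨h, hh, he⟩ := gpq_restrict hp hg
    refine ⟨h, hh, fun j => ?_⟩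
    simp only [Equiv.Perm.mul_apply]
    rw [key1 j, he (ρ⁻¹ j)]
    exact key0 _
  refine ⟨ρ, ?_⟩
  have hmain : ∀ f : Perm (Fin p),
      distToCode f (conjCode ρ (Gcyc p : Set (Perm (Fin p)))) ≤
      coveringRadius (conjCode π (Gpq p q : Set (Perm (Fin (p+q))))) := by
    intro f
    set F : Perm (Fin (p+q)) :=
      Equiv.Perm.subtypeCongr (m'.toEquiv.permCongr f) (Equiv.refl _) with hFdef
    have hF : ∀ j, F (m j) = m (f j) := by
      intro j
      have hms : m j ∈ S := (m' j).property
      rw [hFdef, Equiv.Perm.subtypeCongr.left_apply _ _ hms]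
      have h1 : (⟨m j, hms⟩ : {x // x ∈ S}) = m'.toEquiv j := Subtype.ext rfl
      rw [Equiv.permCongr_apply, h1, Equiv.symm_apply_apply]
      rfl
    -- the second code and its distance set are nonempty
    have hC2 : (conjCode π (Gpq p q : Set (Perm (Fin (p+q))))).Nonempty :=
      ⟨π * 1 * π⁻¹, ⟨1, one_mem _, rfl⟩⟩
    have him : (linfDist F '' conjCode π (Gpq p q : Set (Perm (Fin (p+q))))).Nonempty :=
      hC2.image _
    obtain ⟨k, hk, hkval⟩ := Nat.sInf_mem him
    obtain ⟨g, hg, rfl⟩ := hk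
    obtain ⟨h, hh, hkey⟩ := key2 g hg
    have hdist : linfDist f (ρ * h * ρ⁻¹) ≤ linfDist F (π * g * π⁻¹) := by
      apply Finset.sup_le
      intro i _
      calc (((f i).val : ℤ) - (((ρ * h * ρ⁻¹) i).val : ℤ)).natAbs
          ≤ (((m (f i)).val : ℤ) - ((m ((ρ * h * ρ⁻¹) i)).val : ℤ)).natAbs :=
            natAbs_le_of_strictMono m hmmono _ _
        _ = (((F (m i)).val : ℤ) - (((π * g * π⁻¹) (m i)).val : ℤ)).natAbs := by
            rw [hF i, hkey i]
        _ ≤ linfDist F (π * g * π⁻¹) := by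
            unfold linfDist
            exact Finset.le_sup
              (f := fun i : Fin (p+q) =>
                (((F i).val : ℤ) - (((π * g * π⁻¹) i).val : ℤ)).natAbs)
              (Finset.mem_univ (m i))
    have hstep1 : distToCode f (conjCode ρ (Gcyc p : Set (Perm (Fin p)))) ≤
        linfDist f (ρ * h * ρ⁻¹) :=
      Nat.sInf_le ⟨ρ * h * ρ⁻¹, ⟨h, hh, rfl⟩, rfl⟩
    have hstep2 : distToCode F (conjCode π (Gpq p q : Set (Perm (Fin (p+q))))) =
        linfDist F (π * g * π⁻¹) := hkval.symm
    have hstep3 : distToCode F (conjCode π (Gpq p q : Set (Perm (Fin (p+q))))) ≤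
        coveringRadius (conjCode π (Gpq p q : Set (Perm (Fin (p+q))))) :=
      le_csSup (Set.finite_range _).bddAbove ⟨F, rfl⟩
    omega
  unfold coveringRadius
  refine csSup_le ⟨distToCode 1 (conjCode ρ (Gcyc p : Set (Perm (Fin p)))), ⟨1, rfl⟩⟩ ?_
  rintro _ ⟨f, rfl⟩
  exact hmain f

/-- For all positive integers `p ≥ q`, `L_min(G_{p,q}) ≥ L_min(G_p)`. -/
theorem stmt_8 (p q : ℕ) (hq : 1 ≤ q) (hpq : q ≤ p) :
    Lmin (Gcyc p : Set (Perm (Fin p))) ≤ Lmin (Gpq p q : Set (Perm (Fin (p + q)))) := by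
  have hp : 1 ≤ p := le_trans hq hpq
  apply le_csInf (Set.range_nonempty _)
  rintro _ ⟨π, rfl⟩
  obtain ⟨ρ, hρ⟩ := covering_le hp π
  exact le_trans (Nat.sInf_le ⟨ρ, rfl⟩) hρ
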